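/- Fix an integer K ≥ 1 and positive constants L, σ, σ_A, φ_min ≤ φ_max, and s_H. Define τ := φ_min²σ_A/(40φ_max²) + σ_A/2, c_a := max{ ((1+2L²)/2 + 20L²/σ_A)·(2/τ), 1 }, c_ρ := max{ (20L² + 2σ_A L)/(σ_A τ), 1 }, and set ρ := c_ρ·K^{1/3}, a := c_a²/ρ², η := φ_min ρ σ_A/(20 φ_max²). Assume a ≤ 1 and let m ≥ ρ be a real number. Let (ψ_k)_{0 ≤ k ≤ K+1} be reals bounded below by ψ_*, and let (e_k)_{k≥0}, (X_k)_{k≥0}, (Y_k)_{k≥0} be nonnegative reals, with the conventions e_{−1} := 0 and X_{−1} := 0, satisfying: (a) e_0 ≤ σ²/m; (b) e_k ≤ (1−a)²e_{k−1} + 2a²σ² + 2L²(1−a)²X_{k−1} for 1 ≤ k ≤ K; (c) for every 0 ≤ k ≤ K: ψ_{k+1} ≤ ψ_k + (c_a/(2ρ) + 5/(ρσ_A))·e_k + (5/(ρσ_A))·e_{k−1} − s_H·Y_k − (ηφ_min + σ_Aρ/2 − L/2 − ρ/(2c_a) − 5η²φ_max²/(ρσ_A))·X_k + (5(L² + η²φ_max²)/(ρσ_A))·X_{k−1}.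 Then Σ_{k=0}^{K} ( X_k + (4 s_H/(τρ))·Y_k ) ≤ (4(C₁ + ψ_0 − ψ_*)/(τ c_ρ))·K^{−1/3}, where C₁ := (c_a/2 + 10/σ_A)·(σ²/c_a² + 2c_a²σ²/c_ρ³). -/

import Mathlib

/-- `prev f k` is `f (k-1)` with the convention `f (-1) = 0`. -/
def prev (f : ℕ → ℝ) : ℕ → ℝ := fun k => if k = 0 then 0 else f (k - 1)

set_option maxHeartbeats 1000000 in
theorem stmt_10 (K : ℕ) (hK : 1 ≤ K)
    (L σ σA φmin φmax sH : ℝ)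
    (hL : 0 < L) (hσ : 0 < σ) (hσA : 0 < σA) (hφmin : 0 < φmin)
    (hφ : φmin ≤ φmax) (hsH : 0 < sH)
    (τ ca cρ ρ a η C₁ : ℝ)
    (hτ : τ = φmin ^ 2 * σA / (40 * φmax ^ 2) + σA / 2)
    (hca : ca = max (((1 + 2 * L ^ 2) / 2 + 20 * L ^ 2 / σA) * (2 / τ)) 1)
    (hcρ : cρ = max ((20 * L ^ 2 + 2 * σA * L) / (σA * τ)) 1)
    (hρ : ρ = cρ * (K : ℝ) ^ ((1 : ℝ) / 3))
    (haeq : a = ca ^ 2 / ρ ^ 2)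
    (hηeq : η = φmin * ρ * σA / (20 * φmax ^ 2))
    (ha1 : a ≤ 1)
    (m : ℝ) (hm : ρ ≤ m)
    (hC₁ : C₁ = (ca / 2 + 10 / σA) * (σ ^ 2 / ca ^ 2 + 2 * ca ^ 2 * σ ^ 2 / cρ ^ 3))
    (ψ : ℕ → ℝ) (ψstar : ℝ) (hψ : ∀ k ≤ K + 1, ψstar ≤ ψ k)
    (e X Y : ℕ → ℝ) (he : ∀ k, 0 ≤ e k) (hX : ∀ k, 0 ≤ X k) (hY : ∀ k, 0 ≤ Y k)
    (he0 : e 0 ≤ σ ^ 2 / m)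
    (hrec : ∀ k, 1 ≤ k → k ≤ K →
      e k ≤ (1 - a) ^ 2 * e (k - 1) + 2 * a ^ 2 * σ ^ 2 + 2 * L ^ 2 * (1 - a) ^ 2 * X (k - 1))
    (hdesc : ∀ k ≤ K,
      ψ (k + 1) ≤ ψ k + (ca / (2 * ρ) + 5 / (ρ * σA)) * e k + (5 / (ρ * σA)) * prev e k -
        sH * Y k -
        (η * φmin + σA * ρ / 2 - L / 2 - ρ / (2 * ca) - 5 * η ^ 2 * φmax ^ 2 / (ρ * σA)) * X k +
        (5 * (L ^ 2 + η ^ 2 * φmax ^ 2) / (ρ * σA)) * prev X k) :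
    ∑ k ∈ Finset.range (K + 1), (X k + (4 * sH / (τ * ρ)) * Y k) ≤
      (4 * (C₁ + ψ 0 - ψstar) / (τ * cρ)) * (K : ℝ) ^ (-(1 : ℝ) / 3) := by
  have hφmax : 0 < φmax := lt_of_lt_of_le hφmin hφ
  have hτpos : 0 < τ := by rw [hτ]; positivity
  have hca1 : (1:ℝ) ≤ ca := hca ▸ le_max_right _ _
  have hcρ1 : (1:ℝ) ≤ cρ := hcρ ▸ le_max_right _ _
  have hcaM : ((1 + 2 * L ^ 2) / 2 + 20 * L ^ 2 / σA) * (2 / τ) ≤ ca := hca ▸ le_max_left _ _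
  have hcρM : (20 * L ^ 2 + 2 * σA * L) / (σA * τ) ≤ cρ := hcρ ▸ le_max_left _ _
  have hK13 : (1:ℝ) ≤ (K:ℝ) ^ ((1:ℝ)/3) :=
    Real.one_le_rpow (by exact_mod_cast hK) (by norm_num)
  have hρcρ : cρ ≤ ρ := by
    rw [hρ]
    exact le_mul_of_one_le_right (by linarith) hK13
  have hρ1 : (1:ℝ) ≤ ρ := le_trans hcρ1 hρcρ
  have hρpos : (0:ℝ) < ρ := by linarith
  have hcapos : (0:ℝ) < ca := by linarith
  have hcρpos : (0:ℝ) < cρ := by linarith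
  have hapos : (0:ℝ) < a := by rw [haeq]; positivity
  have hcube : ρ^3 = cρ^3 * K := by
    rw [hρ, mul_pow]
    congr 1
    rw [← Real.rpow_natCast ((K:ℝ)^((1:ℝ)/3)) 3, ← Real.rpow_mul (by positivity)]
    norm_num
  have hKpos : (0:ℝ) < K := by exact_mod_cast hK
  have hKval : (K:ℝ) = ρ^3 / cρ^3 := by field_simp [hcube]; linarith [hcube]
  -- abbreviations
  set B : ℝ := ca / (2 * ρ) + 5 / (ρ * σA) with hB
  set D : ℝ := 5 / (ρ * σA) with hD
  set Γ : ℝ := η * φmin + σA * ρ / 2 - L / 2 - ρ / (2 * ca) - 5 * η ^ 2 * φmax ^ 2 / (ρ * σA)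
    with hΓ
  set P : ℝ := 5 * (L ^ 2 + η ^ 2 * φmax ^ 2) / (ρ * σA) with hP
  set SX : ℝ := ∑ k ∈ Finset.range (K+1), X k with hSX
  set SY : ℝ := ∑ k ∈ Finset.range (K+1), Y k with hSY
  set SE : ℝ := ∑ k ∈ Finset.range (K+1), e k with hSE
  clear_value B D Γ P SX SY SE
  have hSXnn : 0 ≤ SX := hSX ▸ Finset.sum_nonneg fun i _ => hX i
  have hSYnn : 0 ≤ SY := hSY ▸ Finset.sum_nonneg fun i _ => hY i
  have hSEnn : 0 ≤ SE := hSE ▸ Finset.sum_nonneg fun i _ => he i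
  have hprevsum : ∀ f : ℕ → ℝ,
      ∑ k ∈ Finset.range (K+1), prev f k = ∑ k ∈ Finset.range K, f k := by
    intro f
    rw [Finset.sum_range_succ']
    simp [prev]
  have hsub : ∀ f : ℕ → ℝ, (∀ k, 0 ≤ f k) →
      ∑ k ∈ Finset.range K, f k ≤ ∑ k ∈ Finset.range (K+1), f k := fun f hf =>
    Finset.sum_le_sum_of_subset_of_nonneg (Finset.range_subset_range.mpr (Nat.le_succ K))
      (fun i _ _ => hf i)
  have hDnn : 0 ≤ D := by rw [hD]; positivity
  have hBDnn : 0 ≤ B + D := by rw [hB, hD]; positivity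
  have hPnn : 0 ≤ P := by rw [hP]; positivity
  -- Step 1: telescoping sum of descent inequality
  have step1 : ψ (K+1) - ψ 0 ≤ B * SE + D * SE - sH * SY - Γ * SX + P * SX := by
    have h1 : ψ (K+1) - ψ 0 = ∑ k ∈ Finset.range (K+1), (ψ (k+1) - ψ k) :=
      (Finset.sum_range_sub ψ (K+1)).symm
    have h2 : ∑ k ∈ Finset.range (K+1), (ψ (k+1) - ψ k) ≤
        ∑ k ∈ Finset.range (K+1),
          (B * e k + D * prev e k - sH * Y k - Γ * X k + P * prev X k) := by
      refine Finset.sum_le_sum fun k hk => ?_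
      have hkK : k ≤ K := by have := Finset.mem_range.mp hk; omega
      have := hdesc k hkK
      linarith
    have h3 : ∑ k ∈ Finset.range (K+1),
          (B * e k + D * prev e k - sH * Y k - Γ * X k + P * prev X k) =
        B * SE + D * (∑ k ∈ Finset.range K, e k) - sH * SY - Γ * SX
          + P * (∑ k ∈ Finset.range K, X k) := by
      rw [Finset.sum_add_distrib, Finset.sum_sub_distrib, Finset.sum_sub_distrib,
        Finset.sum_add_distrib, ← Finset.mul_sum, ← Finset.mul_sum, ← Finset.mul_sum,
        ← Finset.mul_sum, ← Finset.mul_sum, hprevsum, hprevsum, hSX, hSY, hSE]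
    have h4 : D * (∑ k ∈ Finset.range K, e k) ≤ D * SE := by
      rw [hSE]; exact mul_le_mul_of_nonneg_left (hsub e he) hDnn
    have h5 : P * (∑ k ∈ Finset.range K, X k) ≤ P * SX := by
      rw [hSX]; exact mul_le_mul_of_nonneg_left (hsub X hX) hPnn
    have := h2.trans_eq h3
    linarith [h1 ▸ this]
  -- Step 2: bound on the error sum
  have he_sum : a * SE ≤ e 0 + 2 * a^2 * σ^2 * K + 2 * L^2 * SX := by
    have h1 : SE = (∑ k ∈ Finset.range K, e (k+1)) + e 0 := by
      rw [hSE]; exact Finset.sum_range_succ' e K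
    have h2 : ∑ k ∈ Finset.range K, e (k+1) ≤
        ∑ k ∈ Finset.range K, ((1-a)^2 * e k + 2*a^2*σ^2 + 2*L^2*(1-a)^2 * X k) := by
      refine Finset.sum_le_sum fun k hk => ?_
      have hkK : k + 1 ≤ K := Finset.mem_range.mp hk
      have := hrec (k+1) (by omega) hkK
      simpa using this
    have h3 : ∑ k ∈ Finset.range K, ((1-a)^2 * e k + 2*a^2*σ^2 + 2*L^2*(1-a)^2 * X k) =
        (1-a)^2 * (∑ k ∈ Finset.range K, e k) + 2*a^2*σ^2*K
          + 2*L^2*(1-a)^2 * (∑ k ∈ Finset.range K, X k) := by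
      simp only [Finset.sum_add_distrib, ← Finset.mul_sum, Finset.sum_const,
        Finset.card_range, nsmul_eq_mul]
      ring
    have hsq0 : (0:ℝ) ≤ (1-a)^2 := sq_nonneg _
    have hsq1 : (1-a)^2 ≤ 1 := by
      calc (1-a)^2 = 1 - a*(2-a) := by ring
      _ ≤ 1 := by linarith [mul_nonneg hapos.le (show (0:ℝ) ≤ 2 - a by linarith)]
    have h4 : (1-a)^2 * (∑ k ∈ Finset.range K, e k) ≤ (1-a)^2 * SE := by
      rw [hSE]; exact mul_le_mul_of_nonneg_left (hsub e he) hsq0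
    have h5a : 2*L^2*(1-a)^2 * (∑ k ∈ Finset.range K, X k) ≤ 2*L^2*(1-a)^2 * SX := by
      rw [hSX]
      exact mul_le_mul_of_nonneg_left (hsub X hX) (by positivity)
    have h5b : 2*L^2*(1-a)^2 * SX ≤ 2*L^2 * SX := by
      have hint := mul_nonneg (mul_nonneg (by positivity : (0:ℝ) ≤ 2*L^2) hSXnn)
        (by linarith : (0:ℝ) ≤ 1 - (1-a)^2)
      linarith only [hint]
    have h6 : SE ≤ (1-a)^2 * SE + 2*a^2*σ^2*K + 2*L^2*SX + e 0 := by
      have h23 := h2.trans_eq h3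
      linarith only [h23, h5a.trans h5b, h4, h1]
    have hint := mul_nonneg hSEnn (mul_nonneg hapos.le (by linarith : (0:ℝ) ≤ 1 - a))
    linarith only [h6, hint]
  -- Combine with lower bound on ψ
  have hψK : ψstar ≤ ψ (K+1) := hψ (K+1) le_rfl
  have combine : Γ * SX - P * SX + sH * SY ≤ ψ 0 - ψstar + B * SE + D * SE := by
    linarith only [step1, hψK]
  -- multiply error-sum bound
  have hane : a ≠ 0 := hapos.ne'
  have hBDa : 0 ≤ (B + D) / a := div_nonneg hBDnn hapos.le
  have hBDSE : (B + D) * SE ≤ (B+D)/a * (e 0 + 2*a^2*σ^2*K) + ((B+D)/a * (2*L^2)) * SX := by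
    have h := mul_le_mul_of_nonneg_left he_sum hBDa
    have hid : (B+D)/a * (a * SE) = (B+D) * SE := by
      rw [← mul_assoc, div_mul_cancel₀ _ hane]
    rw [hid] at h
    linarith only [h]
  -- Fact A : the constant part is ≤ C₁
  have he0' : e 0 ≤ σ^2 / ρ := by
    refine he0.trans ?_
    gcongr
  have factA : (B+D)/a * (e 0 + 2*a^2*σ^2*K) ≤ C₁ := by
    have hid : (B+D)/a * (σ^2/ρ + 2*a^2*σ^2*K) = C₁ := by
      rw [hC₁, hB, hD, haeq, hKval]
      field_simp
      ring
    have h1 : (B+D)/a * (e 0 + 2*a^2*σ^2*K) ≤ (B+D)/a * (σ^2/ρ + 2*a^2*σ^2*K) := by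
      apply mul_le_mul_of_nonneg_left _ hBDa
      linarith
    rw [hid] at h1
    exact h1
  -- Fact B : coefficient bound
  have factB : τ * ρ / 4 ≤ Γ - P - (B+D)/a * (2*L^2) := by
    have hΓP : Γ - P = τ * ρ - L/2 - ρ/(2*ca) - 5*L^2/(ρ*σA) := by
      rw [hΓ, hP, hηeq, hτ]
      field_simp
      ring
    have hBD2 : (B+D)/a * (2*L^2) = (L^2 * ca + 20*L^2/σA) * ρ / ca^2 := by
      rw [hB, hD, haeq]
      field_simp
      ring
    rw [hΓP, hBD2]
    -- (i) ρ/(2ca) + (L²ca + 20L²/σA)ρ/ca² ≤ τρ/2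
    have hi : ρ/(2*ca) + (L^2 * ca + 20*L^2/σA) * ρ / ca^2 ≤ τ * ρ / 2 := by
      have hM : (1 + 2*L^2)/2 + 20*L^2/σA ≤ ca * (τ/2) := by
        have h := mul_le_mul_of_nonneg_right hcaM (by positivity : (0:ℝ) ≤ τ/2)
        have hq : ((1 + 2*L^2)/2 + 20*L^2/σA) * (2/τ) * (τ/2)
            = (1 + 2*L^2)/2 + 20*L^2/σA := by
          field_simp
        rw [hq] at h
        linarith only [h]
      have h20 : 20*L^2/σA * ρ / ca^2 ≤ 20*L^2/σA * ρ / ca := by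
        have hle : ca ≤ ca^2 := by
          linarith only [mul_le_mul_of_nonneg_left hca1 hcapos.le,
            (by ring : ca * ca = ca^2)]
        gcongr
      have hexp : ρ/(2*ca) + L^2*ca*ρ/ca^2 + 20*L^2/σA * ρ / ca
          = ((1 + 2*L^2)/2 + 20*L^2/σA) * (ρ / ca) := by
        field_simp
      have h1 : ((1 + 2*L^2)/2 + 20*L^2/σA) * (ρ / ca) ≤ (ca * (τ/2)) * (ρ / ca) :=
        mul_le_mul_of_nonneg_right hM (by positivity)
      have h2 : (ca * (τ/2)) * (ρ / ca) = τ * ρ / 2 := by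
        field_simp
      have hsplit : (L^2 * ca + 20*L^2/σA) * ρ / ca^2
          = L^2*ca*ρ/ca^2 + 20*L^2/σA * ρ / ca^2 := by ring
      rw [hsplit]
      rw [h2] at h1
      linarith only [h20, hexp, h1]
    -- (ii) L/2 + 5L²/(ρσA) ≤ τρ/4
    have hii : L/2 + 5*L^2/(ρ*σA) ≤ τ * ρ / 4 := by
      have h1 : (20 * L ^ 2 + 2 * σA * L) / σA ≤ τ * cρ := by
        rw [div_le_iff₀ hσA]
        have h0 := (div_le_iff₀ (by positivity : (0:ℝ) < σA * τ)).mp hcρM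
        linarith only [h0]
      have h2 : τ * cρ ≤ τ * ρ := mul_le_mul_of_nonneg_left hρcρ hτpos.le
      have h3 : 5*L^2/(ρ*σA) ≤ 5*L^2/σA := by
        have hle : σA ≤ ρ * σA := by
          linarith only [mul_le_mul_of_nonneg_right hρ1 hσA.le]
        gcongr
      have h4 : (20 * L ^ 2 + 2 * σA * L) / σA = 4 * (5*L^2/σA + L/2) := by
        field_simp
        ring
      rw [h4] at h1
      linarith
    linarith
  -- Final assembly
  have final : (τ * ρ / 4) * SX + sH * SY ≤ C₁ + ψ 0 - ψstar := by
    have h1 := mul_le_mul_of_nonneg_right factB hSXnn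
    linarith only [h1, combine, hBDSE, factA]
  have hgoalL : ∑ k ∈ Finset.range (K + 1), (X k + (4 * sH / (τ * ρ)) * Y k)
      = SX + (4 * sH / (τ * ρ)) * SY := by
    rw [Finset.sum_add_distrib, ← Finset.mul_sum, hSX, hSY]
  have hK13' : (K:ℝ) ^ (-(1:ℝ)/3) = ((K:ℝ) ^ ((1:ℝ)/3))⁻¹ := by
    rw [neg_div, Real.rpow_neg hKpos.le]
  have hK13pos : (0:ℝ) < (K:ℝ) ^ ((1:ℝ)/3) := by positivity
  have hgoalR : (4 * (C₁ + ψ 0 - ψstar) / (τ * cρ)) * (K : ℝ) ^ (-(1 : ℝ) / 3)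
      = 4 * (C₁ + ψ 0 - ψstar) / (τ * ρ) := by
    rw [hK13', hρ]
    rw [div_mul_eq_mul_div, div_eq_div_iff (by positivity) (by positivity)]
    field_simp
  rw [hgoalL, hgoalR]
  have h2 := mul_le_mul_of_nonneg_left final (by positivity : (0:ℝ) ≤ 4/(τ*ρ))
  have hl : 4/(τ*ρ) * ((τ * ρ / 4) * SX + sH * SY) = SX + (4 * sH / (τ * ρ)) * SY := by
    field_simp
  have hr : 4/(τ*ρ) * (C₁ + ψ 0 - ψstar) = 4 * (C₁ + ψ 0 - ψstar) / (τ * ρ) := by ring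
  rw [hl, hr] at h2
  exact h2
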